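/- Fix r_1 < ... < r_k, n > r_k² with M_n primitive, and a minimal presentation ρ ⊆ ker π_n of M_n. Then the set τ = {((z_1,...,z_k), (z'_1,...,z'_k)) : (z,z') ∈ ρ, |z| = |z'|} ⊆ ℕ^k × ℕ^k is a presentation of S = ⟨r_1,...,r_k⟩: the congruence on ℕ^k generated by τ equals ker π, where π(s) = Σ s_i r_i. -/

import Mathlib

open Finset

/-- Length of a factorization. -/
def vlen {m : ℕ} (z : Fin m → ℕ) : ℕ := ∑ i, z i

/-- Factorization homomorphism of `M_n = ⟨n, n+r_1, ..., n+r_k⟩`. -/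
def piM (k n : ℕ) (r : Fin (k + 1) → ℕ) (z : Fin (k + 2) → ℕ) : ℕ :=
  z 0 * n + ∑ i : Fin (k + 1), z i.succ * (n + r i)

/-- Two factorizations of `β` lie in the same connected component of the factorization
graph `∇_β`: there is a path of factorizations of `β`, consecutive ones sharing a
common positive coordinate. -/
def SameComp {m : ℕ} (π : (Fin m → ℕ) → ℕ) (β : ℕ) :
    (Fin m → ℕ) → (Fin m → ℕ) → Prop :=
  Relation.ReflTransGen (fun a b => π a = β ∧ π b = β ∧ ∃ i, 0 < a i ∧ 0 < b i)

/-- `β` is a Betti element: its factorization graph is disconnected. -/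
def IsBetti {m : ℕ} (π : (Fin m → ℕ) → ℕ) (β : ℕ) : Prop :=
  ∃ z z', π z = β ∧ π z' = β ∧ ¬ SameComp π β z z'

/-- The map `Φ_n` on pairs of factorizations. -/
def Phi (k : ℕ) (p : (Fin (k + 2) → ℕ) × (Fin (k + 2) → ℕ)) :
    (Fin (k + 2) → ℕ) × (Fin (k + 2) → ℕ) :=
  if vlen p.2 < vlen p.1 then
    (p.1 + (vlen p.1 - vlen p.2) • Pi.single (0 : Fin (k + 2)) 1,
     p.2 + (vlen p.1 - vlen p.2) • Pi.single (Fin.last (k + 1)) 1)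
  else if vlen p.1 < vlen p.2 then
    (p.1 + (vlen p.2 - vlen p.1) • Pi.single (Fin.last (k + 1)) 1,
     p.2 + (vlen p.2 - vlen p.1) • Pi.single (0 : Fin (k + 2)) 1)
  else p

/-- The congruence generated by a set of relations `ρ`. -/
inductive CongGen {m : ℕ} (ρ : Set ((Fin m → ℕ) × (Fin m → ℕ))) :
    (Fin m → ℕ) → (Fin m → ℕ) → Prop
  | of {z z'} : (z, z') ∈ ρ → CongGen ρ z z'
  | refl (z) : CongGen ρ z z
  | symm {z z'} : CongGen ρ z z' → CongGen ρ z' z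
  | trans {x y z} : CongGen ρ x y → CongGen ρ y z → CongGen ρ x z
  | add {z z'} (u) : CongGen ρ z z' → CongGen ρ (z + u) (z' + u)

/-- `ρ` is a presentation for the monoid with factorization homomorphism `π`. -/
def IsPres {m : ℕ} (π : (Fin m → ℕ) → ℕ)
    (ρ : Set ((Fin m → ℕ) × (Fin m → ℕ))) : Prop :=
  (∀ p ∈ ρ, π p.1 = π p.2) ∧ ∀ z z', CongGen ρ z z' ↔ π z = π z'

/-- `ρ` is a minimal presentation. -/
def IsMinPres {m : ℕ} (π : (Fin m → ℕ) → ℕ)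
    (ρ : Set ((Fin m → ℕ) × (Fin m → ℕ))) : Prop :=
  IsPres π ρ ∧ ∀ ρ' ⊆ ρ, IsPres π ρ' → ρ' = ρ

/-- Primitivity of `M_n`: the gcd of the generators is 1. -/
def Primitive (k n : ℕ) (r : Fin (k + 1) → ℕ) : Prop :=
  Nat.gcd n (Finset.univ.gcd fun i : Fin (k + 1) => n + r i) = 1

/-- Distance between two factorizations. -/
def fdist {m : ℕ} (z z' : Fin m → ℕ) : ℕ :=
  max (∑ i, (z i - min (z i) (z' i))) (∑ i, (z' i - min (z i) (z' i)))

section StmtAux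

lemma vlen_add {m : ℕ} (z u : Fin m → ℕ) : vlen (z + u) = vlen z + vlen u := by
  simp [vlen, Finset.sum_add_distrib]

lemma piM_eq (k n : ℕ) (r : Fin (k + 1) → ℕ) (z : Fin (k + 2) → ℕ) :
    piM k n r z = vlen z * n + ∑ i, z i.succ * r i := by
  unfold piM vlen
  rw [Fin.sum_univ_succ (f := z)]
  simp only [mul_add, Finset.sum_add_distrib, ← Finset.sum_mul]
  ring

lemma piM_add (k n : ℕ) (r : Fin (k + 1) → ℕ) (z u : Fin (k + 2) → ℕ) :
    piM k n r (z + u) = piM k n r z + piM k n r u := by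
  unfold piM
  simp only [Pi.add_apply, add_mul, Finset.sum_add_distrib]
  ring

def Step {m : ℕ} (ρ : Set ((Fin m → ℕ) × (Fin m → ℕ)))
    (w w' : Fin m → ℕ) : Prop :=
  ∃ c d u, ((c, d) ∈ ρ ∨ (d, c) ∈ ρ) ∧ w = c + u ∧ w' = d + u

lemma step_symm {m : ℕ} {ρ : Set ((Fin m → ℕ) × (Fin m → ℕ))} :
    Symmetric (Step ρ) := by
  rintro w w' ⟨c, d, u, h, rfl, rfl⟩
  exact ⟨d, c, u, h.symm, rfl, rfl⟩

lemma chain_add {m : ℕ} {ρ : Set ((Fin m → ℕ) × (Fin m → ℕ))} {x y : Fin m → ℕ}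
    (u : Fin m → ℕ) (h : Relation.ReflTransGen (Step ρ) x y) :
    Relation.ReflTransGen (Step ρ) (x + u) (y + u) := by
  induction h with
  | refl => exact .refl
  | tail _ hstep ih =>
      rcases hstep with ⟨c, d, u₀, hcd, rfl, rfl⟩
      exact ih.tail ⟨c, d, u₀ + u, hcd, by rw [add_assoc], by rw [add_assoc]⟩

lemma congGen_chain {m : ℕ} {ρ : Set ((Fin m → ℕ) × (Fin m → ℕ))} {z z' : Fin m → ℕ}
    (h : CongGen ρ z z') : Relation.ReflTransGen (Step ρ) z z' := by
  induction h with
  | of h => exact Relation.ReflTransGen.single ⟨_, _, 0, Or.inl h, (add_zero _).symm, (add_zero _).symm⟩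
  | refl z => exact .refl
  | symm _ ih => exact (haveI : Std.Symm (Step ρ) := ⟨fun _ _ h => step_symm h⟩; Std.Symm.symm _ _ ih)
  | trans _ _ ih1 ih2 => exact ih1.trans ih2
  | add u _ ih => exact chain_add u ih


lemma exists_subvec {m : ℕ} (s w : Fin m → ℕ) (d : ℕ) (hd : 0 < d)
    (hs : d < ∑ i, s i) :
    ∃ c : Fin m → ℕ, (∀ i, c i ≤ s i) ∧ 0 < ∑ i, c i ∧ (∑ i, c i) ≤ d ∧
      d ∣ ∑ i, c i * w i := by
  classical
  haveI : NeZero d := ⟨hd.ne'⟩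
  set s' : ℕ → ℕ := fun j => if h : j < m then s ⟨j, h⟩ else 0 with hs'
  set w' : ℕ → ℕ := fun j => if h : j < m then w ⟨j, h⟩ else 0 with hw'
  set A : ℕ → ℕ := fun p => ∑ j ∈ Finset.range p, s' j with hA
  set C : ℕ → ℕ → ℕ := fun p j => min (s' j) (p - A j) with hC
  have hAsucc : ∀ j, A (j + 1) = A j + s' j := fun j => Finset.sum_range_succ _ j
  have hsum : ∀ p q, ∑ j ∈ Finset.range q, C p j = min p (A q) := by
    intro p q
    induction q with
    | zero => simp [hA]
    | succ q ih =>
        rw [Finset.sum_range_succ, ih]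
        have h1 := hAsucc q
        simp only [hC]
        omega
  have hAm : A m = ∑ i, s i := by
    rw [show A m = ∑ j ∈ Finset.range m, s' j from rfl,
      ← Fin.sum_univ_eq_sum_range s' m]
    exact Finset.sum_congr rfl fun i _ => by simp [hs', i.isLt]
  have key : ∀ p p' : ℕ, p < p' → p' ≤ d →
      ((∑ j ∈ Finset.range m, C p j * w' j : ℕ) : ZMod d)
        = ((∑ j ∈ Finset.range m, C p' j * w' j : ℕ) : ZMod d) →
      ∃ c : Fin m → ℕ, (∀ i, c i ≤ s i) ∧ 0 < ∑ i, c i ∧ (∑ i, c i) ≤ d ∧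
        d ∣ ∑ i, c i * w i := by
    intro p p' hlt hle heq
    have hmono : ∀ j, C p j ≤ C p' j := by
      intro j; simp only [hC]; omega
    have h1 : ∑ i : Fin m, (C p' i.1 - C p i.1)
        = ∑ j ∈ Finset.range m, (C p' j - C p j) :=
      Fin.sum_univ_eq_sum_range (fun j => C p' j - C p j) m
    have h2 : (∑ j ∈ Finset.range m, C p j) + ∑ j ∈ Finset.range m, (C p' j - C p j)
        = ∑ j ∈ Finset.range m, C p' j := by
      rw [← Finset.sum_add_distrib]
      exact Finset.sum_congr rfl fun j _ => by have := hmono j; omega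
    have h3 := hsum p m
    have h4 := hsum p' m
    refine ⟨fun i => C p' i.1 - C p i.1, ?_, ?_, ?_, ?_⟩
    · intro i
      show C p' i.1 - C p i.1 ≤ s i
      have hle1 : C p' i.1 ≤ s' i.1 := min_le_left _ _
      have hi : s' i.1 = s i := by simp [hs', i.isLt]
      omega
    · show 0 < ∑ i : Fin m, (C p' i.1 - C p i.1)
      omega
    · show ∑ i : Fin m, (C p' i.1 - C p i.1) ≤ d
      omega
    · show d ∣ ∑ i : Fin m, (C p' i.1 - C p i.1) * w i
      have h5 : ∑ i : Fin m, (C p' i.1 - C p i.1) * w i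
          = ∑ j ∈ Finset.range m, (C p' j - C p j) * w' j := by
        rw [← Fin.sum_univ_eq_sum_range (fun j => (C p' j - C p j) * w' j) m]
        exact Finset.sum_congr rfl fun i _ => by simp [hw', i.isLt]
      have h6 : (∑ j ∈ Finset.range m, C p j * w' j)
            + ∑ j ∈ Finset.range m, (C p' j - C p j) * w' j
          = ∑ j ∈ Finset.range m, C p' j * w' j := by
        rw [← Finset.sum_add_distrib]
        refine Finset.sum_congr rfl fun j _ => ?_
        rw [← add_mul]
        congr 1
        have := hmono j
        omega
      rw [h5]
      have hcast : ((∑ j ∈ Finset.range m, C p j * w' j : ℕ) : ZMod d)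
            + ((∑ j ∈ Finset.range m, (C p' j - C p j) * w' j : ℕ) : ZMod d)
          = ((∑ j ∈ Finset.range m, C p' j * w' j : ℕ) : ZMod d) := by
        rw [← Nat.cast_add, h6]
      rw [heq] at hcast
      have hzero := add_eq_left.mp hcast
      exact (ZMod.natCast_eq_zero_iff _ _).mp hzero
  have hcard : Fintype.card (ZMod d) < Fintype.card (Fin (d + 1)) := by
    simp [ZMod.card]
  obtain ⟨p, p', hne, heq⟩ :=
    Fintype.exists_ne_map_eq_of_card_lt
      (fun p : Fin (d + 1) => ((∑ j ∈ Finset.range m, C p.1 j * w' j : ℕ) : ZMod d)) hcard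
  have hne' : (p : ℕ) ≠ (p' : ℕ) := fun h => hne (Fin.ext h)
  rcases hne'.lt_or_gt with h | h
  · exact key p p' h (by omega) heq
  · exact key p' p h (by omega) heq.symm

section Params


variable {k n : ℕ} {r : Fin (k + 1) → ℕ}

/-- all factorizations of `ℓ*n + v` have length `ℓ`, when `ℓ ≤ R`, `v ≤ R*ℓ`, `R² < n`. -/
lemma rigid (hmono : StrictMono r) (hpos : 0 < r 0) (hn : r (Fin.last k) ^ 2 < n)
    {ℓ v : ℕ} (hℓ : ℓ ≤ r (Fin.last k)) (hv : v ≤ r (Fin.last k) * ℓ)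
    (w : Fin (k + 2) → ℕ) (hw : piM k n r w = ℓ * n + v) : vlen w = ℓ := by
  set R := r (Fin.last k) with hR
  have hR0 : 0 < R := lt_of_lt_of_le hpos (hmono.monotone (Fin.zero_le _))
  have hT : (∑ i, w i.succ * r i) ≤ R * vlen w := by
    calc (∑ i, w i.succ * r i) ≤ ∑ i : Fin (k+1), w i.succ * R :=
          Finset.sum_le_sum fun i _ => Nat.mul_le_mul_left _ (hmono.monotone (Fin.le_last i))
    _ = (∑ i : Fin (k+1), w i.succ) * R := by rw [Finset.sum_mul]
    _ ≤ vlen w * R := by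
        apply Nat.mul_le_mul_right
        rw [vlen, Fin.sum_univ_succ (f := w)]
        omega
    _ = R * vlen w := Nat.mul_comm _ _
  rw [piM_eq] at hw
  set A := vlen w with hA
  set T := ∑ i, w i.succ * r i with hT2
  have hRR : R * R < n := by
    have : R ^ 2 = R * R := sq R
    omega
  rcases Nat.lt_trichotomy A ℓ with h | h | h
  · exfalso
    have h1 : A * n + n ≤ ℓ * n := by
      calc A * n + n = (A + 1) * n := by ring
      _ ≤ ℓ * n := Nat.mul_le_mul_right _ (by omega)
    have h2 : R * A + R ≤ R * R := by
      calc R * A + R = R * (A + 1) := by ring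
      _ ≤ R * R := Nat.mul_le_mul_left _ (by omega)
    omega
  · exact h
  · exfalso
    have h1 : ℓ * n + n ≤ A * n := by
      calc ℓ * n + n = (ℓ + 1) * n := by ring
      _ ≤ A * n := Nat.mul_le_mul_right _ (by omega)
    have h2 : R * ℓ ≤ R * R := Nat.mul_le_mul_left _ hℓ
    omega

/-- the "short" case: two short S-factorizations of the same value are congruent
modulo the projected equal-length relations. -/
lemma short {ρ : Set ((Fin (k + 2) → ℕ) × (Fin (k + 2) → ℕ))}
    (hmono : StrictMono r) (hpos : 0 < r 0) (hn : r (Fin.last k) ^ 2 < n)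
    (hP : IsPres (piM k n r) ρ)
    (s t : Fin (k + 1) → ℕ)
    (hs : ∑ i, s i ≤ r (Fin.last k)) (ht : ∑ i, t i ≤ r (Fin.last k))
    (hst : ∑ i, s i * r i = ∑ i, t i * r i) :
    CongGen {q : (Fin (k + 1) → ℕ) × (Fin (k + 1) → ℕ) |
        ∃ p ∈ ρ, vlen p.1 = vlen p.2 ∧
          q.1 = (fun i => p.1 i.succ) ∧ q.2 = (fun i => p.2 i.succ)} s t := by
  set R := r (Fin.last k) with hR
  set τ : Set ((Fin (k + 1) → ℕ) × (Fin (k + 1) → ℕ)) :=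
    {q | ∃ p ∈ ρ, vlen p.1 = vlen p.2 ∧
      q.1 = (fun i => p.1 i.succ) ∧ q.2 = (fun i => p.2 i.succ)} with hτ
  set ℓ := max (∑ i, s i) (∑ i, t i) with hℓdef
  set v := ∑ i, s i * r i with hv
  have hℓR : ℓ ≤ R := max_le hs ht
  have hvR : v ≤ R * ℓ := by
    calc v ≤ ∑ i, s i * R :=
          Finset.sum_le_sum fun i _ => Nat.mul_le_mul_left _ (hmono.monotone (Fin.le_last i))
    _ = (∑ i, s i) * R := by rw [Finset.sum_mul]
    _ ≤ ℓ * R := Nat.mul_le_mul_right _ (le_max_left _ _)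
    _ = R * ℓ := Nat.mul_comm _ _
  -- the lifts
  set z : Fin (k + 2) → ℕ := Fin.cons (ℓ - ∑ i, s i) s with hz
  set z' : Fin (k + 2) → ℕ := Fin.cons (ℓ - ∑ i, t i) t with hz'
  have hvz : ∀ (a : ℕ) (x : Fin (k + 1) → ℕ),
      vlen (Fin.cons a x : Fin (k + 2) → ℕ) = a + ∑ i, x i := by
    intro a x
    rw [vlen, Fin.sum_univ_succ]
    simp [Fin.cons_succ]
  have hπz : ∀ (a : ℕ) (x : Fin (k + 1) → ℕ),
      piM k n r (Fin.cons a x) = (a + ∑ i, x i) * n + ∑ i, x i * r i := by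
    intro a x
    rw [piM_eq, hvz]
    simp [Fin.cons_succ]
  have hπs : piM k n r z = ℓ * n + v := by
    rw [hz, hπz]
    have : ℓ - (∑ i, s i) + ∑ i, s i = ℓ := Nat.sub_add_cancel (le_max_left _ _)
    rw [this]
  have hπt : piM k n r z' = ℓ * n + v := by
    rw [hz', hπz]
    have : ℓ - (∑ i, t i) + ∑ i, t i = ℓ := Nat.sub_add_cancel (le_max_right _ _)
    rw [this, ← hst]
  have hcg : CongGen ρ z z' := (hP.2 z z').mpr (by rw [hπs, hπt])
  have hchain := congGen_chain hcg
  -- walk down the chain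
  have key : ∀ w, Relation.ReflTransGen (Step ρ) w z' → piM k n r w = ℓ * n + v →
      CongGen τ (fun i => w i.succ) (fun i => z' i.succ) := by
    intro w hw
    induction hw using Relation.ReflTransGen.head_induction_on with
    | refl => intro _; exact CongGen.refl _
    | head hstep htail ih =>
        intro ha
        rcases hstep with ⟨x, y, u, hxy, rfl, rfl⟩
        have hπxy : piM k n r x = piM k n r y := by
          rcases hxy with h | h
          · exact hP.1 _ h
          · exact (hP.1 _ h).symm
        have hc : piM k n r (y + u) = ℓ * n + v := by
          rw [piM_add] at ha ⊢
          rw [← hπxy]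
          exact ha
        have hlen1 : vlen (x + u) = ℓ := rigid hmono hpos hn hℓR hvR _ ha
        have hlen2 : vlen (y + u) = ℓ := rigid hmono hpos hn hℓR hvR _ hc
        have hlenxy : vlen x = vlen y := by
          rw [vlen_add] at hlen1 hlen2
          omega
        have hstep' : CongGen τ (fun i => (x + u) i.succ) (fun i => (y + u) i.succ) := by
          have htail_eq : ∀ (a b : Fin (k + 2) → ℕ),
              (fun i : Fin (k + 1) => (a + b) i.succ)
                = (fun i => a i.succ) + (fun i => b i.succ) := fun a b => rfl
          rw [htail_eq x u, htail_eq y u]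
          rcases hxy with h | h
          · exact CongGen.add _ (CongGen.of ⟨(x, y), h, hlenxy, rfl, rfl⟩)
          · exact CongGen.add _ (CongGen.symm (CongGen.of ⟨(y, x), h, hlenxy.symm, rfl, rfl⟩))
        exact hstep'.trans (ih hc)
  have hfin := key z hchain hπs
  have h1 : (fun i : Fin (k + 1) => z i.succ) = s := by
    funext i; rw [hz]; simp [Fin.cons_succ]
  have h2 : (fun i : Fin (k + 1) => z' i.succ) = t := by
    funext i; rw [hz']; simp [Fin.cons_succ]
  rwa [h1, h2] at hfin


lemma main_back {ρ : Set ((Fin (k + 2) → ℕ) × (Fin (k + 2) → ℕ))}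
    (hmono : StrictMono r) (hpos : 0 < r 0) (hn : r (Fin.last k) ^ 2 < n)
    (hP : IsPres (piM k n r) ρ) :
    ∀ (v : ℕ) (s t : Fin (k + 1) → ℕ), (∑ i, s i * r i) = v → (∑ i, t i * r i) = v →
    CongGen {q : (Fin (k + 1) → ℕ) × (Fin (k + 1) → ℕ) |
        ∃ p ∈ ρ, vlen p.1 = vlen p.2 ∧
          q.1 = (fun i => p.1 i.succ) ∧ q.2 = (fun i => p.2 i.succ)} s t := by
  classical
  set τ : Set ((Fin (k + 1) → ℕ) × (Fin (k + 1) → ℕ)) :=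
    {q | ∃ p ∈ ρ, vlen p.1 = vlen p.2 ∧
      q.1 = (fun i => p.1 i.succ) ∧ q.2 = (fun i => p.2 i.succ)} with hτ
  have hrpos : ∀ g, 0 < r g := fun g => lt_of_lt_of_le hpos (hmono.monotone (Fin.zero_le g))
  have hrR : ∀ g, r g ≤ r (Fin.last k) := fun g => hmono.monotone (Fin.le_last g)
  intro v
  induction v using Nat.strong_induction_on with
  | _ v IH =>
  intro s t hs ht
  -- single coordinate decomposition sum
  have hdec : ∀ (a : Fin (k + 1) → ℕ) (g : Fin (k + 1)), 0 < a g →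
      a = (fun i => a i - (if i = g then 1 else 0)) + (fun i => if i = g then 1 else 0) := by
    intro a g hag
    funext i
    show a i = (a i - (if i = g then 1 else 0)) + (if i = g then 1 else 0)
    by_cases h : i = g
    · subst h; simp; omega
    · simp [h]
  have hsumdec : ∀ (a : Fin (k + 1) → ℕ) (g : Fin (k + 1)), 0 < a g →
      (∑ i, (a i - (if i = g then 1 else 0)) * r i) + r g = ∑ i, a i * r i := by
    intro a g hag
    have h1 : ∀ i : Fin (k + 1), (a i - (if i = g then 1 else 0)) * r i
        + (if i = g then 1 else 0) * r i = a i * r i := by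
      intro i
      by_cases h : i = g
      · subst h
        obtain ⟨b, hb⟩ : ∃ b, a i = b + 1 := ⟨a i - 1, by omega⟩
        rw [hb]
        simp
        ring
      · simp [h]
    have h2 : ∑ i, ((a i - (if i = g then 1 else 0)) * r i
        + (if i = g then 1 else 0) * r i) = ∑ i, a i * r i :=
      Finset.sum_congr rfl fun i _ => h1 i
    rw [Finset.sum_add_distrib] at h2
    have h3 : ∑ i : Fin (k + 1), (if i = g then 1 else 0) * r i = r g := by
      simp [ite_mul]
    omega
  -- stripping a common coordinate
  have strip : ∀ (a b : Fin (k + 1) → ℕ) (g : Fin (k + 1)),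
      (∑ i, a i * r i) = v → (∑ i, b i * r i) = v → 0 < a g → 0 < b g →
      CongGen τ a b := by
    intro a b g ha hb hag hbg
    have hvg : r g ≤ v := by
      have : a g * r g ≤ v := by
        rw [← ha]
        exact Finset.single_le_sum (f := fun g => a g * r g)
          (fun i _ => Nat.zero_le _) (Finset.mem_univ g)
      have : r g ≤ a g * r g := Nat.le_mul_of_pos_left _ hag
      omega
    have hlt : v - r g < v := Nat.sub_lt (by have := hrpos g; omega) (hrpos g)
    have h1 := IH (v - r g) hlt (fun i => a i - (if i = g then 1 else 0))
      (fun i => b i - (if i = g then 1 else 0))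
      (by show (∑ i, (a i - (if i = g then 1 else 0)) * r i) = v - r g
          have := hsumdec a g hag; omega)
      (by show (∑ i, (b i - (if i = g then 1 else 0)) * r i) = v - r g
          have := hsumdec b g hbg; omega)
    have h2 := CongGen.add (fun i => if i = g then 1 else 0) h1
    rwa [← hdec a g hag, ← hdec b g hbg] at h2
  -- trading into coordinate j
  have trade : ∀ (a : Fin (k + 1) → ℕ) (j : Fin (k + 1)),
      (∑ i, a i * r i) = v → r j < ∑ i, a i →
      ∃ a' : Fin (k + 1) → ℕ, CongGen τ a a' ∧ (∑ i, a' i * r i) = v ∧ 0 < a' j := by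
    intro a j ha haj
    obtain ⟨c, hcle, hcpos, hcsize, hcdvd⟩ := exists_subvec a r (r j) (hrpos j) haj
    obtain ⟨mq, hmq⟩ := hcdvd
    have hπcpos : 0 < ∑ i, c i * r i := by
      obtain ⟨g, hg⟩ : ∃ g, 0 < c g := by
        by_contra h
        push_neg at h
        have : ∑ i, c i = 0 := Finset.sum_eq_zero fun i _ => by have := h i; omega
        omega
      calc 0 < c g * r g := Nat.mul_pos hg (hrpos g)
      _ ≤ ∑ i, c i * r i := Finset.single_le_sum (f := fun g => c g * r g)
          (fun i _ => Nat.zero_le _) (Finset.mem_univ g)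
    have hsumsplit : (∑ i, (a i - c i) * r i) + (∑ i, c i * r i) = v := by
      rw [← Finset.sum_add_distrib, ← ha]
      apply Finset.sum_congr rfl
      intro i _
      have := hcle i
      rw [← add_mul]
      congr 1
      omega
    have hrem_pos : 0 < ∑ i, (a i - c i) * r i := by
      obtain ⟨g, hg⟩ : ∃ g, 0 < a g - c g := by
        by_contra h
        push_neg at h
        have h0 : ∀ i, a i - c i = 0 := fun i => by have := h i; omega
        have h2 : (∑ i, (a i - c i)) + ∑ i, c i = ∑ i, a i := by
          rw [← Finset.sum_add_distrib]
          exact Finset.sum_congr rfl fun i _ => by have := hcle i; omega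
        have h3 : ∑ i, (a i - c i) = 0 := Finset.sum_eq_zero fun i _ => h0 i
        have := hrpos j
        omega
      calc 0 < (a g - c g) * r g := Nat.mul_pos hg (hrpos g)
      _ ≤ ∑ i, (a i - c i) * r i :=
          Finset.single_le_sum (f := fun g => (a g - c g) * r g)
          (fun i _ => Nat.zero_le _) (Finset.mem_univ g)
    have hπclt : (∑ i, c i * r i) < v := by omega
    have hmqpos : 0 < mq := by
      rcases Nat.eq_zero_or_pos mq with h | h
      · rw [h, Nat.mul_zero] at hmq; omega
      · exact h
    have hπb : ∑ i, (if i = j then mq else 0) * r i = ∑ i, c i * r i := by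
      have hsingle : ∑ i : Fin (k + 1), (if i = j then mq else 0) * r i = mq * r j := by
        rw [Finset.sum_eq_single j]
        · simp
        · intro b _ hb; simp [hb]
        · intro h; exact absurd (Finset.mem_univ j) h
      rw [hsingle, hmq, Nat.mul_comm]
    have hcb : CongGen τ c (fun i => if i = j then mq else 0) :=
      IH (∑ i, c i * r i) hπclt _ _ rfl hπb
    have h2 := CongGen.add (fun i => a i - c i) hcb
    have hca : c + (fun i => a i - c i) = a := by
      funext i
      show c i + (a i - c i) = a i
      have := hcle i
      omega
    rw [hca] at h2
    refine ⟨(fun i => if i = j then mq else 0) + (fun i => a i - c i), h2, ?_, ?_⟩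
    · have : ∑ i, ((fun i => if i = j then mq else 0) + fun i => a i - c i) i * r i
          = (∑ i, (if i = j then mq else 0) * r i) + ∑ i, (a i - c i) * r i := by
        rw [← Finset.sum_add_distrib]
        exact Finset.sum_congr rfl fun i _ => by show _ * _ = _; rw [← add_mul]; rfl
      rw [this, hπb]
      omega
    · show 0 < (if j = j then mq else 0) + (a j - c j)
      simp [hmqpos]
  -- main case split
  by_cases hv0 : v = 0
  · subst hv0
    have hz : ∀ (a : Fin (k + 1) → ℕ), (∑ i, a i * r i) = 0 → a = 0 := by
      intro a ha
      funext i
      have h1 : ∀ g ∈ Finset.univ, a g * r g = 0 := by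
        intro g _
        by_contra h
        have h2 : 0 < a g * r g := Nat.pos_of_ne_zero h
        have h3 : a g * r g ≤ 0 := ha ▸
          Finset.single_le_sum (f := fun g => a g * r g) (fun i _ => Nat.zero_le _)
            (Finset.mem_univ g)
        omega
      have := h1 i (Finset.mem_univ i)
      have := hrpos i
      show a i = 0
      by_contra h
      have : 0 < a i := Nat.pos_of_ne_zero h
      nlinarith
    rw [hz s hs, hz t ht]
    exact CongGen.refl _
  · have hvpos : 0 < v := Nat.pos_of_ne_zero hv0
    obtain ⟨i0, hi0⟩ : ∃ g, 0 < s g := by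
      by_contra h
      push_neg at h
      have : ∑ i, s i * r i = 0 := Finset.sum_eq_zero fun i _ => by
        have h0 : s i = 0 := by have := h i; omega
        rw [h0, Nat.zero_mul]
      omega
    obtain ⟨j0, hj0⟩ : ∃ g, 0 < t g := by
      by_contra h
      push_neg at h
      have : ∑ i, t i * r i = 0 := Finset.sum_eq_zero fun i _ => by
        have h0 : t i = 0 := by have := h i; omega
        rw [h0, Nat.zero_mul]
      omega
    by_cases hshare : ∃ g, 0 < s g ∧ 0 < t g
    · obtain ⟨g, hg1, hg2⟩ := hshare
      exact strip s t g hs ht hg1 hg2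
    · by_cases h1 : r j0 < ∑ i, s i
      · obtain ⟨s', hss', hs', hs'j⟩ := trade s j0 hs h1
        exact hss'.trans (strip s' t j0 hs' ht hs'j hj0)
      · by_cases h2 : r i0 < ∑ i, t i
        · obtain ⟨t', htt', ht', ht'i⟩ := trade t i0 ht h2
          exact (strip s t' i0 hs ht' hi0 ht'i).trans htt'.symm
        · push_neg at h1 h2
          have hsR : ∑ i, s i ≤ r (Fin.last k) := le_trans h1 (hrR j0)
          have htR : ∑ i, t i ≤ r (Fin.last k) := le_trans h2 (hrR i0)
          exact short hmono hpos hn hP s t hsR htR (by rw [hs, ht])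

end Params

end StmtAux


/-- For `n > r_k²` with `M_n` primitive, the equal-length relations of a minimal
presentation of `M_n`, with first coordinates dropped, form a presentation of
`S = ⟨r_1,...,r_k⟩`. -/
theorem stmt11 (k n : ℕ) (r : Fin (k + 1) → ℕ) (hmono : StrictMono r) (hpos : 0 < r 0)
    (hn : r (Fin.last k) ^ 2 < n) (hprim : Primitive k n r)
    (ρ : Set ((Fin (k + 2) → ℕ) × (Fin (k + 2) → ℕ)))
    (hρ : IsMinPres (piM k n r) ρ) :
    ∀ s s' : Fin (k + 1) → ℕ,
      CongGen {q : (Fin (k + 1) → ℕ) × (Fin (k + 1) → ℕ) |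
          ∃ p ∈ ρ, vlen p.1 = vlen p.2 ∧
            q.1 = (fun i => p.1 i.succ) ∧ q.2 = (fun i => p.2 i.succ)} s s' ↔
        ∑ i, s i * r i = ∑ i, s' i * r i := by
  intro s s'
  constructor
  · intro h
    induction h with
    | of hq =>
        obtain ⟨p, hp, hlen, h1, h2⟩ := hq
        have hπ : piM k n r p.1 = piM k n r p.2 := hρ.1.1 p hp
        rw [piM_eq k n r p.1, piM_eq k n r p.2, hlen] at hπ
        have h3 := Nat.add_left_cancel hπ
        dsimp only at h1 h2
        rw [h1, h2]
        exact h3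
    | refl z => rfl
    | symm _ ih => exact ih.symm
    | trans _ _ ih1 ih2 => exact ih1.trans ih2
    | add u _ ih =>
        simp only [Pi.add_apply, add_mul, Finset.sum_add_distrib]
        omega
  · intro h
    exact main_back hmono hpos hn hρ.1 (∑ i, s i * r i) s s' rfl h.symm
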